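/- Let (x_n) be an interval-filling sequence of positive reals. The range of its cardinal function equals {1,2} if and only if there exists a nonzero constant c with x_n = c/2^n for all n. -/

import Mathlib

open Set

/-- The achievement set of a sequence: all subsums. -/
noncomputable def achSet (x : ℕ → ℝ) : Set ℝ :=
  {t | ∃ S : Set ℕ, ∑' n : S, x n = t}

/-- The cardinal function: the number of representations of `t` as a subsum. -/
noncomputable def cardFun (x : ℕ → ℝ) (t : ℝ) : Cardinal :=
  Cardinal.mk {S : Set ℕ // ∑' n : S, x n = t}

/-- The tail sum `r_k = ∑_{n > k} x n`. -/
noncomputable def tailSum (x : ℕ → ℝ) (k : ℕ) : ℝ := ∑' n, x (k + 1 + n)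

/-- Prepending a term to a sequence. -/
def prepend (y : ℝ) (x : ℕ → ℝ) : ℕ → ℝ := fun n =>
  match n with
  | 0 => y
  | Nat.succ m => x m

section Aux

variable {x : ℕ → ℝ}

/-- shifted total sum -/
private noncomputable def Qt (x : ℕ → ℝ) (n : ℕ) : ℝ := ∑' i, x (i + n)

private lemma Qt_succ (x : ℕ → ℝ) (n : ℕ) : Qt x (n + 1) = tailSum x n :=
  tsum_congr fun i => by rw [show i + (n + 1) = n + 1 + i from by omega]

private lemma Qt_zero (x : ℕ → ℝ) : Qt x 0 = ∑' i, x i :=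
  tsum_congr fun i => by rw [add_zero]

private lemma Qt_rec (hsum : Summable x) (n : ℕ) : Qt x n = x n + Qt x (n + 1) := by
  have h : Summable fun i => x (i + n) := (summable_nat_add_iff n).2 hsum
  rw [Qt, Summable.tsum_eq_zero_add h]
  congr 1
  · rw [zero_add]
  · exact tsum_congr fun i => by rw [show i + 1 + n = i + (n + 1) from by omega]

/-- shifted indicator sum -/
private noncomputable def tailI (x : ℕ → ℝ) (S : Set ℕ) (n : ℕ) : ℝ :=
  ∑' i, S.indicator x (i + n)

private lemma tailI_rec (hsum : Summable x) (S : Set ℕ) (n : ℕ) :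
    tailI x S n = S.indicator x n + tailI x S (n + 1) := by
  have h : Summable fun i => S.indicator x (i + n) :=
    (summable_nat_add_iff n).2 (hsum.indicator S)
  rw [tailI, Summable.tsum_eq_zero_add h]
  congr 1
  · rw [zero_add]
  · exact tsum_congr fun i => by rw [show i + 1 + n = i + (n + 1) from by omega]

private lemma tailI_nonneg (hpos : ∀ n, 0 < x n) (S : Set ℕ) (n : ℕ) : 0 ≤ tailI x S n :=
  tsum_nonneg fun i => Set.indicator_nonneg (fun j _ => (hpos j).le) _

private lemma tailI_le_Qt (hpos : ∀ n, 0 < x n) (hsum : Summable x) (S : Set ℕ) (n : ℕ) :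
    tailI x S n ≤ Qt x n :=
  Summable.tsum_le_tsum (fun i => Set.indicator_le_self' (fun j _ => (hpos j).le) _)
    ((summable_nat_add_iff n).2 (hsum.indicator S)) ((summable_nat_add_iff n).2 hsum)

private lemma subSum_decomp (hsum : Summable x) (S : Set ℕ) (n : ℕ) :
    ∑' m : S, x m = (∑ i ∈ Finset.range n, S.indicator x i) + tailI x S n := by
  rw [tsum_subtype, ← Summable.sum_add_tsum_nat_add n (hsum.indicator S)]
  rfl

private lemma eq_zero_of_tsum {f : ℕ → ℝ} (hf : Summable f) (h0 : ∀ i, 0 ≤ f i)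
    (h : ∑' i, f i = 0) (i : ℕ) : f i = 0 :=
  le_antisymm (h ▸ Summable.le_tsum hf i fun j _ => h0 j) (h0 i)

private lemma tsum_eq_forcing {f g : ℕ → ℝ} (hf : Summable f) (hg : Summable g)
    (hle : ∀ i, f i ≤ g i) (h : ∑' i, g i ≤ ∑' i, f i) : ∀ i, f i = g i := by
  have hd : Summable fun i => g i - f i := hg.sub hf
  have h0 : ∑' i, (g i - f i) = 0 := by
    rw [Summable.tsum_sub hg hf]
    have := Summable.tsum_le_tsum hle hf hg
    linarith
  intro i
  have := eq_zero_of_tsum hd (fun i => sub_nonneg.2 (hle i)) h0 i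
  linarith

private lemma pair_lemma (hpos : ∀ n, 0 < x n) (hsum : Summable x)
    (heq : ∀ n, x n = tailSum x n) {S T : Set ℕ} {n : ℕ}
    (hST : ∑' m : S, x m = ∑' m : T, x m)
    (hnS : n ∈ S) (hnT : n ∉ T) (hlow : ∀ j, j < n → (j ∈ S ↔ j ∈ T)) :
    ∀ j, n < j → j ∉ S ∧ j ∈ T := by
  have hfin : ∑ i ∈ Finset.range n, S.indicator x i = ∑ i ∈ Finset.range n, T.indicator x i := by
    refine Finset.sum_congr rfl fun i hi => ?_
    have hiff := hlow i (Finset.mem_range.1 hi)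
    by_cases h : i ∈ S
    · rw [Set.indicator_of_mem h, Set.indicator_of_mem (hiff.1 h)]
    · rw [Set.indicator_of_notMem h, Set.indicator_of_notMem (fun hh => h (hiff.2 hh))]
  have hdS := subSum_decomp hsum S n
  have hdT := subSum_decomp hsum T n
  have hTT : tailI x S n = tailI x T n := by
    rw [hdS, hdT, hfin] at hST
    linarith
  have hrS : tailI x S n = x n + tailI x S (n + 1) := by
    rw [tailI_rec hsum S n, Set.indicator_of_mem hnS]
  have hrT : tailI x T n = tailI x T (n + 1) := by
    rw [tailI_rec hsum T n, Set.indicator_of_notMem hnT, zero_add]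
  have hQ : Qt x (n + 1) = x n := by rw [Qt_succ]; exact (heq n).symm
  have h1 : tailI x T (n + 1) ≤ x n := hQ ▸ tailI_le_Qt hpos hsum T (n + 1)
  have h2 : 0 ≤ tailI x S (n + 1) := tailI_nonneg hpos S (n + 1)
  have hS0 : tailI x S (n + 1) = 0 := by linarith
  have hT0 : x n ≤ tailI x T (n + 1) := by linarith
  intro j hj
  have hj' : j = (j - (n + 1)) + (n + 1) := by omega
  constructor
  · intro hjS
    have hz := eq_zero_of_tsum ((summable_nat_add_iff (n + 1)).2 (hsum.indicator S))
      (fun i => Set.indicator_nonneg (fun j _ => (hpos j).le) _) hS0 (j - (n + 1))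
    rw [← hj', Set.indicator_of_mem hjS] at hz
    exact absurd hz (hpos j).ne'
  · have hforce := tsum_eq_forcing ((summable_nat_add_iff (n + 1)).2 (hsum.indicator T))
      ((summable_nat_add_iff (n + 1)).2 hsum)
      (fun i => Set.indicator_le_self' (fun j _ => (hpos j).le) _)
      (by show Qt x (n + 1) ≤ tailI x T (n + 1); rw [hQ]; exact hT0) (j - (n + 1))
    by_contra hjT
    rw [← hj', Set.indicator_of_notMem hjT] at hforce
    exact absurd hforce.symm (hpos j).ne'

private lemma split_lemma (hpos : ∀ n, 0 < x n) (hsum : Summable x)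
    (heq : ∀ n, x n = tailSum x n) {S T : Set ℕ}
    (hST : ∑' m : S, x m = ∑' m : T, x m) (hne : S ≠ T) :
    ∃ n, (∀ j, j < n → (j ∈ S ↔ j ∈ T)) ∧
      ((n ∈ S ∧ n ∉ T ∧ ∀ j, n < j → j ∉ S ∧ j ∈ T) ∨
       (n ∈ T ∧ n ∉ S ∧ ∀ j, n < j → j ∉ T ∧ j ∈ S)) := by
  classical
  have hex : ∃ n, ¬(n ∈ S ↔ n ∈ T) := by
    by_contra h
    push_neg at h
    exact hne (Set.ext fun n => h n)
  set n := Nat.find hex with hndef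
  have hn : ¬(n ∈ S ↔ n ∈ T) := Nat.find_spec hex
  have hlow : ∀ j, j < n → (j ∈ S ↔ j ∈ T) := by
    intro j hj
    have := Nat.find_min hex hj
    simp only [not_not] at this
    exact this
  by_cases hS : n ∈ S
  · have hT : n ∉ T := fun h => hn ⟨fun _ => h, fun _ => hS⟩
    exact ⟨n, hlow, Or.inl ⟨hS, hT, pair_lemma hpos hsum heq hST hS hT hlow⟩⟩
  · have hT : n ∈ T := by tauto
    refine ⟨n, hlow, Or.inr ⟨hT, hS, pair_lemma hpos hsum heq hST.symm hT hS
      (fun j hj => (hlow j hj).symm)⟩⟩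

private lemma unique_partner (hpos : ∀ n, 0 < x n) (hsum : Summable x)
    (heq : ∀ n, x n = tailSum x n) {S T U : Set ℕ}
    (hT : ∑' m : T, x m = ∑' m : S, x m) (hU : ∑' m : U, x m = ∑' m : S, x m)
    (hTS : T ≠ S) (hUS : U ≠ S) : T = U := by
  obtain ⟨n, hlown, hcn⟩ := split_lemma hpos hsum heq hT.symm (Ne.symm hTS)
  obtain ⟨m, hlowm, hcm⟩ := split_lemma hpos hsum heq hU.symm (Ne.symm hUS)
  rcases hcn with ⟨hnS, hnT, hup⟩ | ⟨hnT, hnS, hup⟩ <;>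
    rcases hcm with ⟨hmS, hmU, hupm⟩ | ⟨hmU, hmS, hupm⟩
  · -- S terminating at n and at m
    have hnm : n = m := by
      rcases lt_trichotomy n m with h | h | h
      · exact absurd hmS (hup m h).1
      · exact h
      · exact absurd hnS (hupm n h).1
    subst hnm
    ext j
    rcases lt_trichotomy j n with h | h | h
    · exact ((hlown j h).symm.trans (hlowm j h))
    · subst h; exact iff_of_false hnT hmU
    · exact iff_of_true (hup j h).2 (hupm j h).2
  · -- S terminating at n, S cofinal from m : contradiction
    exact absurd (hupm (n + m + 1) (by omega)).2 (hup (n + m + 1) (by omega)).1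
  · exact absurd (hup (n + m + 1) (by omega)).2 (hupm (n + m + 1) (by omega)).1
  · -- S cofinal in both
    have hnm : n = m := by
      rcases lt_trichotomy n m with h | h | h
      · exact absurd (hup m h).2 hmS
      · exact h
      · exact absurd (hupm n h).2 hnS
    subst hnm
    ext j
    rcases lt_trichotomy j n with h | h | h
    · exact ((hlown j h).symm.trans (hlowm j h))
    · subst h; exact iff_of_true hnT hmU
    · exact iff_of_false (hup j h).1 (hupm j h).1

private noncomputable def gp (x : ℕ → ℝ) (t : ℝ) : ℕ → ℝ
  | 0 => 0
  | n + 1 => gp x t n + if x n ≤ t - gp x t n then x n else 0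

private lemma greedy_core (hpos : ∀ n, 0 < x n) (hsum : Summable x)
    (hIF : ∀ n, x n ≤ tailSum x n) {t : ℝ} (ht0 : 0 ≤ t) (ht1 : t ≤ ∑' n, x n) :
    ∃ S : Set ℕ, ∑' n : S, x n = t := by
  classical
  set S : Set ℕ := {n | x n ≤ t - gp x t n} with hSdef
  have hind : ∀ n, S.indicator x n = if x n ≤ t - gp x t n then x n else 0 := by
    intro n
    by_cases h : x n ≤ t - gp x t n
    · rw [Set.indicator_of_mem (show n ∈ S from h), if_pos h]
    · rw [Set.indicator_of_notMem (show n ∉ S from h), if_neg h]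
  have hpart : ∀ n, ∑ i ∈ Finset.range n, S.indicator x i = gp x t n := by
    intro n
    induction n with
    | zero => simp [gp]
    | succ m ih => rw [Finset.sum_range_succ, ih, hind]; rfl
  have hinv : ∀ n, 0 ≤ t - gp x t n ∧ t - gp x t n ≤ Qt x n := by
    intro n
    induction n with
    | zero =>
      refine ⟨by simpa [gp] using ht0, ?_⟩
      rw [Qt_zero]
      simpa [gp] using ht1
    | succ m ih =>
      have hq := Qt_rec hsum m
      have hif : x m ≤ Qt x (m + 1) := by rw [Qt_succ]; exact hIF m
      by_cases h : x m ≤ t - gp x t m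
      · rw [show gp x t (m + 1) = gp x t m + if x m ≤ t - gp x t m then x m else 0 from rfl,
          if_pos h]
        exact ⟨by linarith, by linarith [ih.2]⟩
      · rw [show gp x t (m + 1) = gp x t m + if x m ≤ t - gp x t m then x m else 0 from rfl,
          if_neg h, add_zero]
        push_neg at h
        exact ⟨ih.1, by linarith⟩
  have hten : Filter.Tendsto (fun n => t - gp x t n) Filter.atTop (nhds 0) :=
    squeeze_zero (fun n => (hinv n).1) (fun n => (hinv n).2) (tendsto_sum_nat_add x)
  have hpt : Filter.Tendsto (fun n => gp x t n) Filter.atTop (nhds t) := by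
    have h2 := Filter.Tendsto.const_sub t hten
    simpa using h2
  have hhs : HasSum (S.indicator x) t := by
    rw [hasSum_iff_tendsto_nat_of_nonneg
      (fun i => Set.indicator_nonneg (fun j _ => (hpos j).le) i) t]
    exact Filter.Tendsto.congr (fun n => (hpart n).symm) hpt
  exact ⟨S, by rw [tsum_subtype]; exact hhs.tsum_eq⟩

private lemma greedy_tail (hpos : ∀ n, 0 < x n) (hsum : Summable x)
    (hIF : ∀ n, x n ≤ tailSum x n) (k : ℕ) {t : ℝ} (ht0 : 0 ≤ t) (ht1 : t ≤ tailSum x k) :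
    ∃ A : Set ℕ, (∀ j ∈ A, k < j) ∧ ∑' n : A, x n = t := by
  set y : ℕ → ℝ := fun n => x (k + 1 + n) with hy
  have hysum : Summable y := by
    have h := (summable_nat_add_iff (k + 1)).2 hsum
    exact h.congr fun n => by rw [show n + (k + 1) = k + 1 + n from by omega]
  have hypos : ∀ n, 0 < y n := fun n => hpos _
  have hyIF : ∀ n, y n ≤ tailSum y n := by
    intro n
    have h1 : tailSum y n = tailSum x (k + 1 + n) := by
      rw [tailSum, tailSum]
      exact tsum_congr fun m => by
        show x (k + 1 + (n + 1 + m)) = x (k + 1 + n + 1 + m)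
        rw [show k + 1 + (n + 1 + m) = k + 1 + n + 1 + m from by omega]
    rw [h1]
    exact hIF (k + 1 + n)
  have hy1 : t ≤ ∑' n, y n := ht1
  obtain ⟨B, hB⟩ := greedy_core hypos hysum hyIF ht0 hy1
  refine ⟨(fun n => k + 1 + n) '' B, ?_, ?_⟩
  · rintro j ⟨b, _, rfl⟩
    show k < k + 1 + b
    omega
  · rw [tsum_image x (fun a _ b _ h => by simpa using h : Set.InjOn (fun n => k + 1 + n) B)]
    exact hB

private lemma sum_gt_set (x : ℕ → ℝ) (k : ℕ) :
    ∑' m : {j : ℕ | k < j}, x m = tailSum x k := by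
  let e : ℕ ≃ {j : ℕ | k < j} :=
    { toFun := fun m => ⟨k + 1 + m, by simp only [Set.mem_setOf_eq]; omega⟩
      invFun := fun j => j.1 - (k + 1)
      left_inv := fun m => by show k + 1 + m - (k + 1) = m; omega
      right_inv := fun j => Subtype.ext (by
        have := j.2
        simp only [Set.mem_setOf_eq] at this
        show k + 1 + (j.1 - (k + 1)) = j.1
        omega) }
  rw [← Equiv.tsum_eq e (fun j : {j : ℕ | k < j} => x j)]
  exact tsum_congr fun m => rfl

private lemma card_reps_zero (hpos : ∀ n, 0 < x n) (hsum : Summable x) :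
    cardFun x 0 = 1 := by
  rw [cardFun, Cardinal.eq_one_iff_unique]
  have hempty : ∀ S : Set ℕ, (∑' n : S, x n) = 0 → S = ∅ := by
    intro S hS
    rw [Set.eq_empty_iff_forall_notMem]
    intro n hn
    have hle : x n ≤ ∑' m : S, x m :=
      Summable.le_tsum (hsum.subtype S) (⟨n, hn⟩ : S) (fun j _ => (hpos _).le)
    rw [hS] at hle
    exact absurd hle (not_le.2 (hpos n))
  constructor
  · constructor
    rintro ⟨S, hS⟩ ⟨T, hT⟩
    exact Subtype.ext ((hempty S hS).trans (hempty T hT).symm)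
  · exact ⟨⟨∅, by simp⟩⟩

private lemma card_reps_x0 (hpos : ∀ n, 0 < x n) (hsum : Summable x)
    (heq : ∀ n, x n = tailSum x n) : cardFun x (x 0) = 2 := by
  have hsum0 : ∑' m : {j : ℕ | 0 < j}, x m = x 0 := by
    rw [sum_gt_set x 0]; exact (heq 0).symm
  rw [cardFun, Cardinal.mk_eq_two_iff]
  have hne : ({0} : Set ℕ) ≠ {j : ℕ | 0 < j} := by
    intro h
    have h1 : (1 : ℕ) ∈ {j : ℕ | 0 < j} := by simp
    rw [← h] at h1
    simp at h1
  refine ⟨⟨{0}, tsum_singleton 0 x⟩, ⟨{j : ℕ | 0 < j}, hsum0⟩,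
    fun h => hne (congrArg Subtype.val h), ?_⟩
  rw [Set.eq_univ_iff_forall]
  rintro ⟨U, hU⟩
  simp only [Set.mem_insert_iff, Set.mem_singleton_iff]
  by_cases h : U = {0}
  · left; exact Subtype.ext h
  · right
    refine Subtype.ext ?_
    exact unique_partner hpos hsum heq (S := ({0} : Set ℕ))
      (by rw [hU, tsum_singleton]) (by rw [hsum0, tsum_singleton]) h hne.symm

private lemma card_mem (hpos : ∀ n, 0 < x n) (hsum : Summable x)
    (heq : ∀ n, x n = tailSum x n) {t : ℝ} {S : Set ℕ} (hS : ∑' n : S, x n = t) :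
    cardFun x t = 1 ∨ cardFun x t = 2 := by
  classical
  have h1 : (1 : Cardinal) ≤ cardFun x t := by
    rw [Cardinal.one_le_iff_ne_zero, cardFun]
    have : Nonempty {S : Set ℕ // ∑' n : S, x n = t} := ⟨⟨S, hS⟩⟩
    exact Cardinal.mk_ne_zero _
  have h2 : cardFun x t ≤ 2 := by
    by_cases hall : ∀ U : {S : Set ℕ // ∑' n : S, x n = t}, U.1 = S
    · have hss : Subsingleton {S : Set ℕ // ∑' n : S, x n = t} :=
        ⟨fun a b => Subtype.ext ((hall a).trans (hall b).symm)⟩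
      calc cardFun x t ≤ 1 := Cardinal.le_one_iff_subsingleton.2 hss
        _ ≤ 2 := by norm_num
    · push_neg at hall
      obtain ⟨T0, hT0⟩ := hall
      have hmap : ∀ U : {S : Set ℕ // ∑' n : S, x n = t}, U.1 = S ∨ U.1 = T0.1 := by
        intro U
        by_cases h : U.1 = S
        · exact Or.inl h
        · exact Or.inr (unique_partner hpos hsum heq
            (U.2.trans hS.symm) (T0.2.trans hS.symm) h hT0)
      have hinj : Function.Injective
          (fun U : {S : Set ℕ // ∑' n : S, x n = t} =>
            (if U.1 = S then 0 else 1 : Fin 2)) := by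
        intro U V huv
        by_cases hu : U.1 = S <;> by_cases hv : V.1 = S
        · exact Subtype.ext (hu.trans hv.symm)
        · simp [hu, hv] at huv
        · simp [hu, hv] at huv
        · have hU1 := (hmap U).resolve_left hu
          have hV1 := (hmap V).resolve_left hv
          exact Subtype.ext (hU1.trans hV1.symm)
      calc cardFun x t ≤ Cardinal.mk (Fin 2) := Cardinal.mk_le_of_injective hinj
        _ = 2 := by rw [Cardinal.mk_fin]; norm_num
  have hlt : cardFun x t < Cardinal.aleph0 := lt_of_le_of_lt h2 (by
    have h3 := Cardinal.nat_lt_aleph0.{0} 2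
    simpa using h3)
  obtain ⟨n, hn⟩ := Cardinal.lt_aleph0.1 hlt
  rw [hn] at h1 h2 ⊢
  have hb1 : 1 ≤ n := by exact_mod_cast h1
  have hb2 : n ≤ 2 := by exact_mod_cast h2
  interval_cases n
  · left; norm_num
  · right; norm_num

private lemma image_eq (hpos : ∀ n, 0 < x n) (hsum : Summable x)
    (heq : ∀ n, x n = tailSum x n) : cardFun x '' achSet x = {1, 2} := by
  ext y
  simp only [Set.mem_image, achSet, Set.mem_setOf_eq, Set.mem_insert_iff,
    Set.mem_singleton_iff]
  constructor
  · rintro ⟨t, ⟨S, hS⟩, rfl⟩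
    exact card_mem hpos hsum heq hS
  · rintro (rfl | rfl)
    · exact ⟨0, ⟨∅, by simp⟩, card_reps_zero hpos hsum⟩
    · exact ⟨x 0, ⟨{0}, tsum_singleton 0 x⟩, card_reps_x0 hpos hsum heq⟩

private lemma formula_heq (hc : ∃ c : ℝ, c ≠ 0 ∧ ∀ n, x n = c / 2 ^ (n + 1)) :
    ∀ n, x n = tailSum x n := by
  obtain ⟨c, hc0, hc⟩ := hc
  intro n
  have h2 : ∀ m : ℕ, x (n + 1 + m) = (c / 2 ^ (n + 2)) * (1 / 2 : ℝ) ^ m := by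
    intro m
    rw [hc (n + 1 + m), show n + 1 + m + 1 = (n + 2) + m from by omega, pow_add,
      div_pow, one_pow, div_mul_div_comm, mul_one]
  rw [tailSum, tsum_congr h2, tsum_mul_left,
    tsum_geometric_of_lt_one (by norm_num) (by norm_num), hc n,
    show ((1 : ℝ) - 1 / 2)⁻¹ = 2 by norm_num, show n + 2 = (n + 1) + 1 from rfl, pow_succ]
  have h20 : (2 : ℝ) ^ (n + 1) ≠ 0 := by positivity
  field_simp
  ring


end Aux

theorem stmt5 (x : ℕ → ℝ) (hpos : ∀ n, 0 < x n) (hanti : ∀ n, x (n + 1) ≤ x n)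
    (hsum : Summable x) (hIF : ∀ n, x n ≤ tailSum x n) :
    cardFun x '' achSet x = {1, 2} ↔ ∃ c : ℝ, c ≠ 0 ∧ ∀ n, x n = c / 2 ^ (n + 1) := by
  constructor
  · intro himg
    have heq : ∀ n, x n = tailSum x n := by
      intro k
      by_contra hk
      have hlt : x k < tailSum x k := lt_of_le_of_ne (hIF k) hk
      obtain ⟨A, hAsub, hAsum⟩ := greedy_tail hpos hsum hIF k (hpos k).le (hIF k)
      have hAne : ∃ p, k < p ∧ p ∉ A := by
        by_contra h
        push_neg at h
        have hA : A = {j | k < j} := Set.ext fun j => ⟨fun hj => hAsub j hj, fun hj => h j hj⟩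
        rw [hA, sum_gt_set] at hAsum
        linarith
      obtain ⟨p, hkp, hpA⟩ := hAne
      obtain ⟨B, hBsub, hBsum⟩ := greedy_tail hpos hsum hIF p (hpos p).le (hIF p)
      have hkA : k ∉ A := fun h => lt_irrefl k (hAsub k h)
      have hkB : k ∉ B := fun h => by have := hBsub k h; omega
      have hpB : p ∉ B := fun h => lt_irrefl p (hBsub p h)
      have hR1 : ∑' n : ↥(({k} : Set ℕ) ∪ {p}), x ↑n = x k + x p := by
        rw [Summable.tsum_union_disjoint (Set.disjoint_singleton.2 (by omega))
          (hsum.subtype _) (hsum.subtype _), tsum_singleton, tsum_singleton]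
      have hR2 : ∑' n : ↥(A ∪ ({p} : Set ℕ)), x ↑n = x k + x p := by
        rw [Summable.tsum_union_disjoint (Set.disjoint_singleton_right.2 hpA)
          (hsum.subtype _) (hsum.subtype _), tsum_singleton, hAsum]
      have hR3 : ∑' n : ↥(({k} : Set ℕ) ∪ B), x ↑n = x k + x p := by
        rw [Summable.tsum_union_disjoint (Set.disjoint_singleton_left.2 hkB)
          (hsum.subtype _) (hsum.subtype _), tsum_singleton, hBsum]
      have h12 : (({k} : Set ℕ) ∪ {p}) ≠ (A ∪ {p}) := by
        intro h
        have hm : k ∈ A ∪ ({p} : Set ℕ) := by rw [← h]; simp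
        rcases (Set.mem_union _ _ _).1 hm with h' | h'
        · exact hkA h'
        · rw [Set.mem_singleton_iff] at h'; omega
      have h13 : (({k} : Set ℕ) ∪ {p}) ≠ (({k} : Set ℕ) ∪ B) := by
        intro h
        have hm : p ∈ ({k} : Set ℕ) ∪ B := by rw [← h]; simp
        rcases (Set.mem_union _ _ _).1 hm with h' | h'
        · rw [Set.mem_singleton_iff] at h'; omega
        · exact hpB h'
      have h23 : (A ∪ {p}) ≠ (({k} : Set ℕ) ∪ B) := by
        intro h
        have hm : k ∈ A ∪ ({p} : Set ℕ) := by rw [h]; simp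
        rcases (Set.mem_union _ _ _).1 hm with h' | h'
        · exact hkA h'
        · rw [Set.mem_singleton_iff] at h'; omega
      have hmem : cardFun x (x k + x p) ∈ ({1, 2} : Set Cardinal) := by
        rw [← himg]
        exact Set.mem_image_of_mem _ ⟨_, hR1⟩
      simp only [Set.mem_insert_iff, Set.mem_singleton_iff] at hmem
      rcases hmem with h | h
      · rw [cardFun, Cardinal.eq_one_iff_unique] at h
        exact h12 (congrArg Subtype.val (h.1.elim ⟨_, hR1⟩ ⟨_, hR2⟩))
      · rw [cardFun, Cardinal.mk_eq_two_iff'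
          (⟨_, hR1⟩ : {S : Set ℕ // ∑' n : S, x n = x k + x p})] at h
        obtain ⟨y, hy, hyu⟩ := h
        have hb := hyu ⟨_, hR2⟩ (fun hh => h12 (congrArg Subtype.val hh).symm)
        have hc := hyu ⟨_, hR3⟩ (fun hh => h13 (congrArg Subtype.val hh).symm)
        exact h23 (congrArg Subtype.val (hb.trans hc.symm))
    have hhalf : ∀ n, x (n + 1) = x n / 2 := by
      intro n
      have h3 : tailSum x n = x (n + 1) + tailSum x (n + 1) := by
        rw [← Qt_succ x n, ← Qt_succ x (n + 1)]
        exact Qt_rec hsum (n + 1)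
      have h1 := heq n
      have h2 := heq (n + 1)
      linarith
    refine ⟨2 * x 0, mul_ne_zero two_ne_zero (hpos 0).ne', ?_⟩
    intro n
    induction n with
    | zero => rw [pow_one]; ring
    | succ m ih => rw [hhalf m, ih, div_div, ← pow_succ]
  · intro hc
    exact image_eq hpos hsum (formula_heq hc)
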